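/- Monotonicity of UI under adversarial side information: for jointly distributed finite random variables (S,Y,Z,Z'), UI(S; Y \ (Z,Z')) ≤ UI(S; Y \ Z). -/

import Mathlib

open Finset Real

section Defs
variable {α β γ : Type*} [Fintype α] [Fintype β] [Fintype γ]

/-- `p` is a probability distribution on a finite type. -/
def IsDist (p : α → ℝ) : Prop := (∀ a, 0 ≤ p a) ∧ ∑ a, p a = 1

/-- `k` is a channel (stochastic matrix): each row is a distribution. -/
def IsChannel (k : α → β → ℝ) : Prop := ∀ a, IsDist (k a)

/-- Kullback–Leibler divergence (base 2) between distributions on a finite type. -/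
noncomputable def klDiv2 (p q : α → ℝ) : ℝ := ∑ a, p a * Real.logb 2 (p a / q a)

/-- Channel composition: `(chComp lam mu) a c = ∑ b, lam b c * mu a b`. -/
def chComp (lam : β → γ → ℝ) (mu : α → β → ℝ) : α → γ → ℝ :=
  fun a c => ∑ b, lam b c * mu a b

/-- Conditional (weighted) KL divergence `D(k ∥ k' | pi)`. -/
noncomputable def condKL (pi : α → ℝ) (k k' : α → β → ℝ) : ℝ :=
  ∑ a, pi a * klDiv2 (k a) (k' a)

/-- Weighted output deficiency `δ_o^π(μ,κ) = inf_λ D(κ ∥ λ∘μ | π)`. -/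
noncomputable def defOut (pi : α → ℝ) (mu : α → γ → ℝ) (kap : α → β → ℝ) : ℝ :=
  sInf {d | ∃ lam : γ → β → ℝ, IsChannel lam ∧ d = condKL pi kap (chComp lam mu)}

/-- Risk of a fixed strategy `rho` used after observing through channel `nu`. -/
noncomputable def riskWith {S O A : Type*} [Fintype S] [Fintype O] [Fintype A]
    (pi : S → ℝ) (nu : S → O → ℝ) (rho : O → A → ℝ) (l : S → A → ℝ) : ℝ :=
  ∑ s, pi s * ∑ a, chComp rho nu s a * l s a

/-- Optimal Bayes risk `R(π,ν,ℓ)`. -/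
noncomputable def bayesRisk {S O A : Type*} [Fintype S] [Fintype O] [Fintype A]
    (pi : S → ℝ) (nu : S → O → ℝ) (l : S → A → ℝ) : ℝ :=
  sInf {r | ∃ rho : O → A → ℝ, IsChannel rho ∧ r = riskWith pi nu rho l}

/-- Total variation distance between distributions on a finite type. -/
noncomputable def tvDist (p q : α → ℝ) : ℝ := (∑ a, |p a - q a|) / 2

end Defs

section Joint
variable {S Y Z : Type*} [Fintype S] [Fintype Y] [Fintype Z]

noncomputable def margSY (P : S × Y × Z → ℝ) : S × Y → ℝ := fun p => ∑ z, P (p.1, p.2, z)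
noncomputable def margSZ (P : S × Y × Z → ℝ) : S × Z → ℝ := fun p => ∑ y, P (p.1, y, p.2)
noncomputable def margYZ (P : S × Y × Z → ℝ) : Y × Z → ℝ := fun p => ∑ s, P (s, p.1, p.2)
noncomputable def margS (P : S × Y × Z → ℝ) : S → ℝ := fun s => ∑ y, ∑ z, P (s, y, z)
noncomputable def margY (P : S × Y × Z → ℝ) : Y → ℝ := fun y => ∑ s, ∑ z, P (s, y, z)
noncomputable def margZ (P : S × Y × Z → ℝ) : Z → ℝ := fun z => ∑ s, ∑ y, P (s, y, z)

/-- Mutual information `I(S;Y)` (base 2) of the (S,Y)-marginal of `P`. -/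
noncomputable def miSY (P : S × Y × Z → ℝ) : ℝ :=
  ∑ s, ∑ y, margSY P (s, y) * Real.logb 2 (margSY P (s, y) / (margS P s * margY P y))

/-- Mutual information `I(S;Z)` (base 2) of the (S,Z)-marginal of `P`. -/
noncomputable def miSZ (P : S × Y × Z → ℝ) : ℝ :=
  ∑ s, ∑ z, margSZ P (s, z) * Real.logb 2 (margSZ P (s, z) / (margS P s * margZ P z))

/-- Conditional mutual information `I(S;Y|Z)` (base 2) under `P`. -/
noncomputable def condMI (P : S × Y × Z → ℝ) : ℝ :=
  ∑ s, ∑ y, ∑ z,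
    P (s, y, z) * Real.logb 2 (P (s, y, z) * margZ P z / (margSZ P (s, z) * margYZ P (y, z)))

/-- The feasible set `Δ_P`: joint distributions with the same (S,Y)- and (S,Z)-marginals as `P`. -/
def marginalPolytope (P : S × Y × Z → ℝ) : Set (S × Y × Z → ℝ) :=
  {Q | IsDist Q ∧ margSY Q = margSY P ∧ margSZ Q = margSZ P}

/-- Minimum-synergy unique information `UI(S;Y\Z) = inf_{Q ∈ Δ_P} I_Q(S;Y|Z)`. -/
noncomputable def UI (P : S × Y × Z → ℝ) : ℝ :=
  sInf (condMI '' marginalPolytope P)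

noncomputable def condYgivenS (P : S × Y × Z → ℝ) : S → Y → ℝ :=
  fun s y => margSY P (s, y) / margS P s
noncomputable def condZgivenS (P : S × Y × Z → ℝ) : S → Z → ℝ :=
  fun s z => margSZ P (s, z) / margS P s
noncomputable def condSgivenY (P : S × Y × Z → ℝ) : Y → S → ℝ :=
  fun y s => margSY P (s, y) / margY P y
noncomputable def condSgivenZ (P : S × Y × Z → ℝ) : Z → S → ℝ :=
  fun z s => margSZ P (s, z) / margZ P z

/-- Weighted input deficiency `δ_i^π(μ̄,κ̄) = inf_{λ̄} ∑_y π_Y(y) D(κ̄_y ∥ (μ̄∘λ̄)_y)`. -/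
noncomputable def defIn {Y' Z' S' : Type*} [Fintype Y'] [Fintype Z'] [Fintype S']
    (piY : Y' → ℝ) (mub : Z' → S' → ℝ) (kab : Y' → S' → ℝ) : ℝ :=
  sInf {d | ∃ lb : Y' → Z' → ℝ, IsChannel lb ∧
    d = ∑ y, piY y * klDiv2 (kab y) (chComp mub lb y)}

end Joint


section Aux

lemma gibbs_aux {ι : Type*} [Fintype ι] (a b : ι → ℝ)
    (ha : ∀ i, 0 ≤ a i) (hb : ∀ i, 0 ≤ b i)
    (hab : ∀ i, b i = 0 → a i = 0)
    (hsum : ∑ i, b i ≤ ∑ i, a i) :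
    0 ≤ ∑ i, a i * Real.logb 2 (a i / b i) := by
  have hlog2 : (0:ℝ) < Real.log 2 := Real.log_pos (by norm_num)
  have key : ∀ i, (a i - b i) / Real.log 2 ≤ a i * Real.logb 2 (a i / b i) := by
    intro i
    rcases eq_or_lt_of_le (ha i) with h0 | hpos
    · rw [← h0]
      simp only [mul_zero, zero_mul, zero_sub]
      rw [div_le_iff₀ hlog2]
      simp [hb i]
    · have hbpos : 0 < b i := by
        rcases eq_or_lt_of_le (hb i) with h0' | h'
        · exact absurd (hab i h0'.symm) (by linarith)
        · exact h'
      have h1 : Real.log (b i / a i) ≤ b i / a i - 1 :=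
        Real.log_le_sub_one_of_pos (div_pos hbpos hpos)
      have h2 : 1 - b i / a i ≤ Real.log (a i / b i) := by
        rw [Real.log_div (ne_of_gt hpos) (ne_of_gt hbpos)]
        rw [Real.log_div (ne_of_gt hbpos) (ne_of_gt hpos)] at h1
        linarith
      have h3 : a i - b i ≤ a i * Real.log (a i / b i) := by
        have := mul_le_mul_of_nonneg_left h2 (le_of_lt hpos)
        calc a i - b i = a i * (1 - b i / a i) := by field_simp
          _ ≤ a i * Real.log (a i / b i) := this
      rw [Real.logb, ← mul_div_assoc, div_le_div_iff₀ hlog2 hlog2]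
      nlinarith
  calc (0:ℝ) ≤ (∑ i, a i - ∑ i, b i) / Real.log 2 := by
        apply div_nonneg (by linarith) (le_of_lt hlog2)
    _ = ∑ i, (a i - b i) / Real.log 2 := by
        rw [← Finset.sum_sub_distrib, Finset.sum_div]
    _ ≤ ∑ i, a i * Real.logb 2 (a i / b i) := Finset.sum_le_sum fun i _ => key i

lemma sum_comm4 {A B C D : Type*} [Fintype A] [Fintype B] [Fintype C] [Fintype D]
    (f : A → B → C → D → ℝ) :
    ∑ b, ∑ c, ∑ d, ∑ a, f a b c d = ∑ a, ∑ b, ∑ c, ∑ d, f a b c d := by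
  calc ∑ b, ∑ c, ∑ d, ∑ a, f a b c d
      = ∑ b, ∑ c, ∑ a, ∑ d, f a b c d := by
        refine Finset.sum_congr rfl fun b _ => Finset.sum_congr rfl fun c _ => ?_
        exact Finset.sum_comm
    _ = ∑ b, ∑ a, ∑ c, ∑ d, f a b c d := by
        refine Finset.sum_congr rfl fun b _ => ?_
        exact Finset.sum_comm
    _ = ∑ a, ∑ b, ∑ c, ∑ d, f a b c d := Finset.sum_comm

variable {S Y Z : Type*} [Fintype S] [Fintype Y] [Fintype Z]

omit [Fintype S] [Fintype Z] in
lemma le_margSZ (Q : S × Y × Z → ℝ) (hQ : ∀ p, 0 ≤ Q p) (s : S) (y : Y) (z : Z) :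
    Q (s, y, z) ≤ margSZ Q (s, z) :=
  Finset.single_le_sum (f := fun y => Q (s, y, z)) (fun _ _ => hQ _) (Finset.mem_univ y)

omit [Fintype Y] [Fintype Z] in
lemma le_margYZ (Q : S × Y × Z → ℝ) (hQ : ∀ p, 0 ≤ Q p) (s : S) (y : Y) (z : Z) :
    Q (s, y, z) ≤ margYZ Q (y, z) :=
  Finset.single_le_sum (f := fun s => Q (s, y, z)) (fun _ _ => hQ _) (Finset.mem_univ s)

omit [Fintype Z] in
lemma le_margZ (Q : S × Y × Z → ℝ) (hQ : ∀ p, 0 ≤ Q p) (s : S) (y : Y) (z : Z) :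
    Q (s, y, z) ≤ margZ Q z := by
  calc Q (s, y, z) ≤ margSZ Q (s, z) := le_margSZ Q hQ s y z
    _ ≤ margZ Q z := Finset.single_le_sum (f := fun s => margSZ Q (s, z))
        (fun _ _ => Finset.sum_nonneg fun _ _ => hQ _) (Finset.mem_univ s)

omit [Fintype S] [Fintype Z] in
lemma margSZ_nonneg (Q : S × Y × Z → ℝ) (hQ : ∀ p, 0 ≤ Q p) (s : S) (z : Z) :
    0 ≤ margSZ Q (s, z) := Finset.sum_nonneg fun _ _ => hQ _

omit [Fintype Y] [Fintype Z] in
lemma margYZ_nonneg (Q : S × Y × Z → ℝ) (hQ : ∀ p, 0 ≤ Q p) (y : Y) (z : Z) :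
    0 ≤ margYZ Q (y, z) := Finset.sum_nonneg fun _ _ => hQ _

omit [Fintype Z] in
lemma margZ_nonneg (Q : S × Y × Z → ℝ) (hQ : ∀ p, 0 ≤ Q p) (z : Z) :
    0 ≤ margZ Q z := Finset.sum_nonneg fun _ _ => Finset.sum_nonneg fun _ _ => hQ _

omit [Fintype Z] in
lemma sum_margSZ (Q : S × Y × Z → ℝ) (z : Z) : ∑ s, margSZ Q (s, z) = margZ Q z := rfl

omit [Fintype Z] in
lemma sum_margYZ (Q : S × Y × Z → ℝ) (z : Z) : ∑ y, margYZ Q (y, z) = margZ Q z :=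
  Finset.sum_comm

lemma sum_iter3 (Q : S × Y × Z → ℝ) :
    ∑ s, ∑ y, ∑ z, Q (s, y, z) = ∑ i : S × Y × Z, Q i := by
  rw [Fintype.sum_prod_type]
  exact Finset.sum_congr rfl fun s _ =>
    (Fintype.sum_prod_type (f := fun p : Y × Z => Q (s, p.1, p.2))).symm

lemma sum_margZ_eq_one (Q : S × Y × Z → ℝ) (hQsum : ∑ i : S × Y × Z, Q i = 1) :
    ∑ z, margZ Q z = 1 := by
  have h : ∑ z, margZ Q z = ∑ s, ∑ y, ∑ z, Q (s, y, z) := by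
    show ∑ z, ∑ s, ∑ y, Q (s, y, z) = _
    rw [Finset.sum_comm]
    exact Finset.sum_congr rfl fun s _ => Finset.sum_comm
  rw [h, sum_iter3, hQsum]

lemma condMI_nonneg (Q : S × Y × Z → ℝ) (hQ : IsDist Q) : 0 ≤ condMI Q := by
  obtain ⟨hQnn, hQsum⟩ := hQ
  have hQnn' : ∀ s y z, 0 ≤ Q (s, y, z) := fun s y z => hQnn _
  set b : S × Y × Z → ℝ :=
    fun p => margSZ Q (p.1, p.2.2) * margYZ Q (p.2.1, p.2.2) / margZ Q p.2.2 with hbdef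
  have hform : condMI Q = ∑ i : S × Y × Z, Q i * Real.logb 2 (Q i / b i) := by
    rw [Fintype.sum_prod_type]
    apply Finset.sum_congr rfl; intro s _
    rw [Fintype.sum_prod_type]
    apply Finset.sum_congr rfl; intro y _
    apply Finset.sum_congr rfl; intro z _
    rw [hbdef, div_div_eq_mul_div]
  rw [hform]
  apply gibbs_aux
  · intro i; exact hQnn i
  · rintro ⟨s, y, z⟩
    exact div_nonneg (mul_nonneg (margSZ_nonneg Q hQnn s z) (margYZ_nonneg Q hQnn y z))
      (margZ_nonneg Q hQnn z)
  · rintro ⟨s, y, z⟩ h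
    rcases div_eq_zero_iff.mp h with h | h
    · rcases mul_eq_zero.mp h with h | h
      · exact le_antisymm (h ▸ le_margSZ Q hQnn s y z) (hQnn' s y z)
      · exact le_antisymm (h ▸ le_margYZ Q hQnn s y z) (hQnn' s y z)
    · exact le_antisymm (h ▸ le_margZ Q hQnn s y z) (hQnn' s y z)
  · rw [hQsum]
    have hb1 : ∑ i : S × Y × Z, b i = ∑ z, (margZ Q z * margZ Q z) / margZ Q z := by
      rw [Fintype.sum_prod_type]
      have h1 : ∀ s : S, ∑ p : Y × Z, b (s, p) = ∑ z, ∑ y, b (s, y, z) := by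
        intro s; rw [Fintype.sum_prod_type, Finset.sum_comm]
      rw [Finset.sum_congr rfl fun s _ => h1 s, Finset.sum_comm]
      apply Finset.sum_congr rfl; intro z _
      have h2 : ∀ s : S, ∑ y, b (s, y, z)
          = margSZ Q (s, z) * margZ Q z / margZ Q z := by
        intro s
        simp only [hbdef]
        rw [← Finset.sum_div, ← Finset.mul_sum, sum_margYZ]
      rw [Finset.sum_congr rfl fun s _ => h2 s, ← Finset.sum_div, ← Finset.sum_mul,
        sum_margSZ]
    rw [hb1]
    calc ∑ z, margZ Q z * margZ Q z / margZ Q z ≤ ∑ z, margZ Q z := by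
          apply Finset.sum_le_sum; intro z _
          rcases eq_or_ne (margZ Q z) 0 with h | h
          · rw [h]; simp
          · rw [mul_div_assoc, div_self h, mul_one]
      _ = 1 := sum_margZ_eq_one Q hQsum

end Aux

/-- monotonicity of `UI` under adversarial side information:
`UI(S;Y\(Z,Z')) ≤ UI(S;Y\Z)`. -/
theorem UI_mono_side_information
    {S Y Z Z' : Type*} [Fintype S] [Fintype Y] [Fintype Z] [Fintype Z']
    (P : S × Y × (Z × Z') → ℝ) (hP : IsDist P) :
    UI P ≤ UI (fun p : S × Y × Z => ∑ z' : Z', P (p.1, p.2.1, (p.2.2, z'))) := by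
  classical
  obtain ⟨hPnn, hPsum⟩ := hP
  set P₂ : S × Y × Z → ℝ := fun p => ∑ z' : Z', P (p.1, p.2.1, (p.2.2, z')) with hP₂def
  -- Z' is nonempty
  have hZ' : Nonempty Z' := by
    rcases isEmpty_or_nonempty Z' with h | h
    · exfalso
      rw [Finset.sum_of_isEmpty] at hPsum
      norm_num at hPsum
    · exact h
  have hcard : (0:ℝ) < (Fintype.card Z' : ℝ) := by
    exact_mod_cast Fintype.card_pos
  -- marginal kernel of Z' given (s, z) under P
  set k : S → Z → Z' → ℝ := fun s z z' =>
    if margSZ P₂ (s, z) = 0 then (Fintype.card Z' : ℝ)⁻¹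
    else margSZ P (s, (z, z')) / margSZ P₂ (s, z) with hkdef
  have hknn : ∀ s z z', 0 ≤ k s z z' := by
    intro s z z'
    rw [hkdef]
    dsimp only
    split
    · positivity
    · exact div_nonneg (Finset.sum_nonneg fun _ _ => hPnn _)
        (margSZ_nonneg P₂ (fun p => Finset.sum_nonneg fun _ _ => hPnn _) s z)
  have hcc : ∀ s z, ∑ z', margSZ P (s, (z, z')) = margSZ P₂ (s, z) := by
    intro s z
    exact Finset.sum_comm
  have hksum : ∀ s z, ∑ z', k s z z' = 1 := by
    intro s z
    rw [hkdef]
    dsimp only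
    split
    · rw [Finset.sum_const, nsmul_eq_mul]
      field_simp
      rfl
    · rw [← Finset.sum_div, hcc]
      exact div_self (by assumption)
  have hkey : ∀ s z z', margSZ P₂ (s, z) * k s z z' = margSZ P (s, (z, z')) := by
    intro s z z'
    rw [hkdef]
    dsimp only
    split
    · rename_i h
      rw [h, zero_mul]
      symm
      have h0 : ∀ w ∈ (Finset.univ : Finset Z'), 0 ≤ margSZ P (s, (z, w)) :=
        fun w _ => Finset.sum_nonneg fun _ _ => hPnn _
      have := (Finset.sum_eq_zero_iff_of_nonneg h0).mp ((hcc s z).trans h)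
      exact this z' (Finset.mem_univ z')
    · rename_i h
      field_simp
  apply le_csInf
  · refine ⟨condMI P₂, ⟨P₂, ⟨⟨fun p => Finset.sum_nonneg fun _ _ => hPnn _, ?_⟩, rfl, rfl⟩, rfl⟩⟩
    rw [← hPsum, ← sum_iter3, ← sum_iter3 P]
    apply Finset.sum_congr rfl; intro s _
    apply Finset.sum_congr rfl; intro y _
    exact (Fintype.sum_prod_type (f := fun w : Z × Z' => P (s, y, w))).symm
  · rintro r ⟨Q, ⟨⟨hQnn, hQsum⟩, hQSY, hQSZ⟩, rfl⟩
    set Q' : S × Y × (Z × Z') → ℝ :=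
      fun p => Q (p.1, p.2.1, p.2.2.1) * k p.1 p.2.2.1 p.2.2.2 with hQ'def
    have hQ'nn : ∀ p, 0 ≤ Q' p := fun p => mul_nonneg (hQnn _) (hknn _ _ _)
    have hQszP : ∀ s z, margSZ Q (s, z) = margSZ P₂ (s, z) := fun s z =>
      congrFun hQSZ (s, z)
    have hsumw : ∀ s y, ∑ w : Z × Z', Q' (s, y, w) = ∑ z, Q (s, y, z) := by
      intro s y
      rw [Fintype.sum_prod_type (f := fun w : Z × Z' => Q' (s, y, w))]
      apply Finset.sum_congr rfl; intro z _
      simp only [hQ'def]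
      rw [← Finset.mul_sum, hksum, mul_one]
    have hmem : Q' ∈ marginalPolytope P := by
      refine ⟨⟨hQ'nn, ?_⟩, ?_, ?_⟩
      · calc ∑ p, Q' p = ∑ s, ∑ y, ∑ w : Z × Z', Q' (s, y, w) := (sum_iter3 Q').symm
          _ = ∑ s, ∑ y, ∑ z, Q (s, y, z) := by
              exact Finset.sum_congr rfl fun s _ => Finset.sum_congr rfl fun y _ => hsumw s y
          _ = 1 := by rw [sum_iter3, hQsum]
      · funext p
        obtain ⟨s, y⟩ := p
        calc margSY Q' (s, y) = ∑ w : Z × Z', Q' (s, y, w) := rfl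
          _ = ∑ z, Q (s, y, z) := hsumw s y
          _ = margSY Q (s, y) := rfl
          _ = margSY P₂ (s, y) := congrFun hQSY (s, y)
          _ = ∑ z, ∑ z', P (s, y, (z, z')) := rfl
          _ = ∑ w : Z × Z', P (s, y, w) :=
              (Fintype.sum_prod_type (f := fun w : Z × Z' => P (s, y, w))).symm
          _ = margSY P (s, y) := rfl
      · funext p
        obtain ⟨s, z, z'⟩ := p
        calc margSZ Q' (s, (z, z')) = ∑ y, Q (s, y, z) * k s z z' := rfl
          _ = margSZ Q (s, z) * k s z z' := by rw [← Finset.sum_mul]; rfl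
          _ = margSZ P₂ (s, z) * k s z z' := by rw [hQszP]
          _ = margSZ P (s, (z, z')) := hkey s z z'
    have hle : condMI Q' ≤ condMI Q := by
      set A : Y → Z → Z' → ℝ := fun y z z' => ∑ s, Q (s, y, z) * k s z z' with hAdef
      set M : Z → Z' → ℝ := fun z z' => ∑ s, margSZ Q (s, z) * k s z z' with hMdef
      have hAnn : ∀ y z z', 0 ≤ A y z z' := fun y z z' =>
        Finset.sum_nonneg fun s _ => mul_nonneg (hQnn _) (hknn _ _ _)
      have hMnn : ∀ z z', 0 ≤ M z z' := fun z z' =>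
        Finset.sum_nonneg fun s _ => mul_nonneg (margSZ_nonneg Q hQnn s z) (hknn _ _ _)
      have hMsum : ∀ z, ∑ z', M z z' = margZ Q z := by
        intro z
        rw [hMdef]
        dsimp only
        rw [Finset.sum_comm]
        calc ∑ s, ∑ z', margSZ Q (s, z) * k s z z'
            = ∑ s, margSZ Q (s, z) := by
              refine Finset.sum_congr rfl fun s _ => ?_
              rw [← Finset.mul_sum, hksum, mul_one]
          _ = margZ Q z := sum_margSZ Q z
      have hm1 : ∀ w : Z × Z', margZ Q' w = M w.1 w.2 := by
        intro w
        show ∑ s, ∑ y, Q' (s, y, w) = _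
        simp only [hQ'def, hMdef]
        exact Finset.sum_congr rfl fun s _ => (Finset.sum_mul ..).symm
      have hm2 : ∀ (s : S) (w : Z × Z'), margSZ Q' (s, w) = margSZ Q (s, w.1) * k s w.1 w.2 := by
        intro s w
        show ∑ y, Q' (s, y, w) = _
        simp only [hQ'def]
        exact (Finset.sum_mul ..).symm
      have hm3 : ∀ (y : Y) (w : Z × Z'), margYZ Q' (y, w) = A y w.1 w.2 := by
        intro y w
        rfl
      -- expanded form of condMI Q'
      have hcondQ' : condMI Q' = ∑ s, ∑ y, ∑ z, ∑ z',
          Q (s, y, z) * k s z z' * Real.logb 2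
            (Q (s, y, z) * k s z z' * M z z' /
              (margSZ Q (s, z) * k s z z' * A y z z')) := by
        refine Finset.sum_congr rfl fun s _ => Finset.sum_congr rfl fun y _ => ?_
        rw [Fintype.sum_prod_type (f := fun w : Z × Z' => Q' (s, y, w) * Real.logb 2
          (Q' (s, y, w) * margZ Q' w / (margSZ Q' (s, w) * margYZ Q' (y, w))))]
        refine Finset.sum_congr rfl fun z _ => Finset.sum_congr rfl fun z' _ => ?_
        simp only [hm1, hm2, hm3]; simp only [hQ'def]
      -- expanded form of condMI Q
      have hcondQ : condMI Q = ∑ s, ∑ y, ∑ z, ∑ z',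
          Q (s, y, z) * k s z z' * Real.logb 2
            (Q (s, y, z) * margZ Q z / (margSZ Q (s, z) * margYZ Q (y, z))) := by
        refine Finset.sum_congr rfl fun s _ => Finset.sum_congr rfl fun y _ =>
          Finset.sum_congr rfl fun z _ => ?_
        rw [← Finset.sum_mul, ← Finset.mul_sum, hksum, mul_one]
      -- the correction term
      have hG : (∑ y, ∑ z, ∑ z', A y z z' * Real.logb 2
            (A y z z' * margZ Q z / (margYZ Q (y, z) * M z z')))
          = ∑ s, ∑ y, ∑ z, ∑ z', Q (s, y, z) * k s z z' * Real.logb 2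
            (A y z z' * margZ Q z / (margYZ Q (y, z) * M z z')) := by
        rw [← sum_comm4]
        refine Finset.sum_congr rfl fun y _ => Finset.sum_congr rfl fun z _ =>
          Finset.sum_congr rfl fun z' _ => ?_
        rw [hAdef]
        exact Finset.sum_mul ..
      -- termwise splitting of the logarithm
      have hterm : ∀ (s : S) (y : Y) (z : Z) (z' : Z'),
          Q (s, y, z) * k s z z' * Real.logb 2
            (Q (s, y, z) * margZ Q z / (margSZ Q (s, z) * margYZ Q (y, z)))
          = Q (s, y, z) * k s z z' * Real.logb 2
            (Q (s, y, z) * k s z z' * M z z' /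
              (margSZ Q (s, z) * k s z z' * A y z z'))
          + Q (s, y, z) * k s z z' * Real.logb 2
            (A y z z' * margZ Q z / (margYZ Q (y, z) * M z z')) := by
        intro s y z z'
        rcases eq_or_ne (Q (s, y, z) * k s z z') 0 with h0 | hne
        · rw [h0]; simp
        · obtain ⟨hQ0, hk0⟩ := mul_ne_zero_iff.mp hne
          have hQpos : 0 < Q (s, y, z) := (hQnn _).lt_of_ne (Ne.symm hQ0)
          have hkpos : 0 < k s z z' := (hknn s z z').lt_of_ne (Ne.symm hk0)
          have hqSZ : 0 < margSZ Q (s, z) := lt_of_lt_of_le hQpos (le_margSZ Q hQnn s y z)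
          have hqYZ : 0 < margYZ Q (y, z) := lt_of_lt_of_le hQpos (le_margYZ Q hQnn s y z)
          have hmZ : 0 < margZ Q z := lt_of_lt_of_le hQpos (le_margZ Q hQnn s y z)
          have hA : 0 < A y z z' := by
            rw [hAdef]
            exact lt_of_lt_of_le (mul_pos hQpos hkpos)
              (Finset.single_le_sum (f := fun s => Q (s, y, z) * k s z z')
                (fun i _ => mul_nonneg (hQnn _) (hknn _ _ _)) (Finset.mem_univ s))
          have hM : 0 < M z z' := by
            rw [hMdef]
            exact lt_of_lt_of_le (mul_pos hqSZ hkpos)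
              (Finset.single_le_sum (f := fun s => margSZ Q (s, z) * k s z z')
                (fun i _ => mul_nonneg (margSZ_nonneg Q hQnn i z) (hknn _ _ _))
                (Finset.mem_univ s))
          have hx1 : Q (s, y, z) * k s z z' * M z z' /
              (margSZ Q (s, z) * k s z z' * A y z z') ≠ 0 :=
            ne_of_gt (div_pos (mul_pos (mul_pos hQpos hkpos) hM)
              (mul_pos (mul_pos hqSZ hkpos) hA))
          have hx2 : A y z z' * margZ Q z / (margYZ Q (y, z) * M z z') ≠ 0 :=
            ne_of_gt (div_pos (mul_pos hA hmZ) (mul_pos hqYZ hM))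
          rw [← mul_add, ← Real.logb_mul hx1 hx2]
          have harg : Q (s, y, z) * k s z z' * M z z' /
                (margSZ Q (s, z) * k s z z' * A y z z')
              * (A y z z' * margZ Q z / (margYZ Q (y, z) * M z z'))
              = Q (s, y, z) * margZ Q z / (margSZ Q (s, z) * margYZ Q (y, z)) := by
            have h1 : margSZ Q (s, z) ≠ 0 := ne_of_gt hqSZ
            have h2 : margYZ Q (y, z) ≠ 0 := ne_of_gt hqYZ
            have h3 : A y z z' ≠ 0 := ne_of_gt hA
            have h4 : M z z' ≠ 0 := ne_of_gt hM
            field_simp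
          rw [harg]
      -- nonnegativity of the correction term
      have hGnn : 0 ≤ ∑ y, ∑ z, ∑ z', A y z z' * Real.logb 2
          (A y z z' * margZ Q z / (margYZ Q (y, z) * M z z')) := by
        set a : Y × Z × Z' → ℝ := fun p => A p.1 p.2.1 p.2.2 with hadef
        set b : Y × Z × Z' → ℝ :=
          fun p => margYZ Q (p.1, p.2.1) * M p.2.1 p.2.2 / margZ Q p.2.1 with hbdef
        have hform : (∑ y, ∑ z, ∑ z', A y z z' * Real.logb 2
            (A y z z' * margZ Q z / (margYZ Q (y, z) * M z z')))
            = ∑ p : Y × Z × Z', a p * Real.logb 2 (a p / b p) := by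
          rw [Fintype.sum_prod_type]
          refine Finset.sum_congr rfl fun y _ => ?_
          rw [Fintype.sum_prod_type]
          refine Finset.sum_congr rfl fun z _ => Finset.sum_congr rfl fun z' _ => ?_
          rw [hadef, hbdef]
          dsimp only
          rw [div_div_eq_mul_div]
        rw [hform]
        apply gibbs_aux
        · rintro ⟨y, z, z'⟩; exact hAnn y z z'
        · rintro ⟨y, z, z'⟩
          exact div_nonneg (mul_nonneg (margYZ_nonneg Q hQnn y z) (hMnn z z'))
            (margZ_nonneg Q hQnn z)
        · rintro ⟨y, z, z'⟩ h
          show A y z z' = 0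
          rw [hAdef]
          dsimp only
          rcases div_eq_zero_iff.mp h with h | h
          · rcases mul_eq_zero.mp h with h | h
            · -- margYZ Q (y,z) = 0
              have h0 : ∀ s ∈ (Finset.univ : Finset S), Q (s, y, z) = 0 := by
                have := (Finset.sum_eq_zero_iff_of_nonneg
                  (fun s _ => hQnn (s, y, z))).mp h
                exact fun s hs => this s hs
              exact Finset.sum_eq_zero fun s hs => by rw [h0 s hs, zero_mul]
            · -- M z z' = 0
              have h0 : ∀ s ∈ (Finset.univ : Finset S),
                  margSZ Q (s, z) * k s z z' = 0 := by
                rw [hMdef] at h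
                exact (Finset.sum_eq_zero_iff_of_nonneg
                  (fun s _ => mul_nonneg (margSZ_nonneg Q hQnn s z) (hknn _ _ _))).mp h
              refine Finset.sum_eq_zero fun s hs => le_antisymm ?_
                (mul_nonneg (hQnn _) (hknn _ _ _))
              calc Q (s, y, z) * k s z z' ≤ margSZ Q (s, z) * k s z z' :=
                    mul_le_mul_of_nonneg_right (le_margSZ Q hQnn s y z) (hknn _ _ _)
                _ = 0 := h0 s hs
          · -- margZ Q z = 0
            refine Finset.sum_eq_zero fun s _ => ?_
            have : Q (s, y, z) = 0 :=
              le_antisymm (h ▸ le_margZ Q hQnn s y z) (hQnn _)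
            rw [this, zero_mul]
        · -- sum of b ≤ sum of a
          have hsa : ∑ p : Y × Z × Z', a p = 1 := by
            have e1 : ∑ p : Y × Z × Z', a p = ∑ y, ∑ z, ∑ z', A y z z' := by
              rw [Fintype.sum_prod_type]
              exact Finset.sum_congr rfl fun y _ =>
                Fintype.sum_prod_type (f := fun w : Z × Z' => A y w.1 w.2)
            rw [e1]
            have e2 : ∑ y, ∑ z, ∑ z', A y z z'
                = ∑ s, ∑ y, ∑ z, ∑ z', Q (s, y, z) * k s z z' := by
              rw [← sum_comm4 (f := fun (s : S) (y : Y) (z : Z) (z' : Z') =>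
                Q (s, y, z) * k s z z')]
            rw [e2]
            calc ∑ s, ∑ y, ∑ z, ∑ z', Q (s, y, z) * k s z z'
                = ∑ s, ∑ y, ∑ z, Q (s, y, z) := by
                  refine Finset.sum_congr rfl fun s _ => Finset.sum_congr rfl fun y _ =>
                    Finset.sum_congr rfl fun z _ => ?_
                  rw [← Finset.mul_sum, hksum, mul_one]
              _ = 1 := by rw [sum_iter3, hQsum]
          have hsb : ∑ p : Y × Z × Z', b p ≤ 1 := by
            have e1 : ∑ p : Y × Z × Z', b p
                = ∑ z, margZ Q z * margZ Q z / margZ Q z := by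
              rw [Fintype.sum_prod_type]
              have e0 : ∀ y, ∑ w : Z × Z', b (y, w) = ∑ z, ∑ z', b (y, z, z') :=
                fun y => Fintype.sum_prod_type (f := fun w : Z × Z' => b (y, w))
              rw [Finset.sum_congr rfl fun y _ => e0 y, Finset.sum_comm]
              refine Finset.sum_congr rfl fun z _ => ?_
              calc ∑ y, ∑ z', b (y, z, z')
                  = ∑ y, margYZ Q (y, z) * margZ Q z / margZ Q z := by
                    refine Finset.sum_congr rfl fun y _ => ?_
                    rw [hbdef]
                    dsimp only
                    rw [← Finset.sum_div, ← Finset.mul_sum, hMsum]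
                _ = margZ Q z * margZ Q z / margZ Q z := by
                    rw [← Finset.sum_div, ← Finset.sum_mul, sum_margYZ]
            rw [e1]
            calc ∑ z, margZ Q z * margZ Q z / margZ Q z ≤ ∑ z, margZ Q z := by
                  apply Finset.sum_le_sum; intro z _
                  rcases eq_or_ne (margZ Q z) 0 with h | h
                  · rw [h]; simp
                  · rw [mul_div_assoc, div_self h, mul_one]
              _ = 1 := sum_margZ_eq_one Q hQsum
          rw [hsa]; exact hsb
      -- put it together
      have hsplit : condMI Q = condMI Q'
          + ∑ y, ∑ z, ∑ z', A y z z' * Real.logb 2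
            (A y z z' * margZ Q z / (margYZ Q (y, z) * M z z')) := by
        rw [hcondQ, hcondQ', hG, ← Finset.sum_add_distrib]
        refine Finset.sum_congr rfl fun s _ => ?_
        rw [← Finset.sum_add_distrib]
        refine Finset.sum_congr rfl fun y _ => ?_
        rw [← Finset.sum_add_distrib]
        refine Finset.sum_congr rfl fun z _ => ?_
        rw [← Finset.sum_add_distrib]
        exact Finset.sum_congr rfl fun z' _ => hterm s y z z'
      linarith
    have hbdd : BddBelow (condMI '' marginalPolytope P) := by
      refine ⟨0, ?_⟩
      rintro r ⟨Q'', hQ'', rfl⟩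
      exact condMI_nonneg Q'' hQ''.1
    calc UI P ≤ condMI Q' := csInf_le hbdd ⟨Q', hmem, rfl⟩
      _ ≤ condMI Q := hle
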